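/- arXiv:2504.08867 — 4 statements merged into one kernel-verified Lean document; each statement's English description precedes it below -/
import Mathlib

section
/- Let 0 < a₁ < a₂ < ... < a_N be real numbers and λ₁ < λ₂ < ... < λ_N be real numbers. Then the generalized Vandermonde matrix M with entries M_{i,j} = a_j^{λ_i} has nonzero determinant. -/
open Finset

lemma exp_poly_zero : ∀ (n : ℕ) (c lam r : Fin n → ℝ), StrictMono r →
    (∀ j, 0 < r j) → Function.Injective lam →
    (∀ j, ∑ i, c i * r j ^ lam i = 0) → ∀ i, c i = 0 := by
  intro n
  induction n with
  | zero => intro c lam r _ _ _ _ i; exact i.elim0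
  | succ n ih =>
    intro c lam r hr hrpos hlam hzero
    set L := lam (Fin.last n) with hL
    set g : ℝ → ℝ := fun x => ∑ i, c i * x ^ (lam i - L) with hg
    have hgzero : ∀ j, g (r j) = 0 := by
      intro j
      have hx := hrpos j
      have heq : g (r j) = (∑ i, c i * r j ^ lam i) / (r j ^ L) := by
        rw [Finset.sum_div]
        refine Finset.sum_congr rfl fun i _ => ?_
        rw [Real.rpow_sub hx, mul_div_assoc]
      rw [heq, hzero j, zero_div]
    have hderiv : ∀ x : ℝ, 0 < x → HasDerivAt g
        (∑ i, c i * ((lam i - L) * x ^ (lam i - L - 1))) x := by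
      intro x hx
      apply HasDerivAt.fun_sum
      intro i _
      exact (Real.hasDerivAt_rpow_const (Or.inl hx.ne')).const_mul (c i)
    have hroll : ∀ j : Fin n, ∃ s, s ∈ Set.Ioo (r j.castSucc) (r j.succ) ∧
        (∑ i, c i * ((lam i - L) * s ^ (lam i - L - 1))) = 0 := by
      intro j
      have hab : r j.castSucc < r j.succ := hr Fin.castSucc_lt_succ
      have hcont : ContinuousOn g (Set.Icc (r j.castSucc) (r j.succ)) := by
        intro x hx
        have hx0 : 0 < x := lt_of_lt_of_le (hrpos _) hx.1
        exact (hderiv x hx0).continuousAt.continuousWithinAt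
      have hd : ∀ x ∈ Set.Ioo (r j.castSucc) (r j.succ),
          HasDerivAt g (∑ i, c i * ((lam i - L) * x ^ (lam i - L - 1))) x := by
        intro x hx
        exact hderiv x (lt_trans (hrpos _) hx.1)
      obtain ⟨s, hs, hs0⟩ := exists_hasDerivAt_eq_zero hab hcont
        (by rw [hgzero, hgzero]) hd
      exact ⟨s, hs, hs0⟩
    choose s hs hs0 using hroll
    have hspos : ∀ j, 0 < s j := fun j => lt_trans (hrpos _) (hs j).1
    have hsmono : StrictMono s := by
      intro j j' hjj'
      calc s j < r j.succ := (hs j).2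
        _ ≤ r j'.castSucc := by
            apply hr.monotone
            have : (j : ℕ) + 1 ≤ (j' : ℕ) := hjj'
            simpa [Fin.le_def] using this
        _ < s j' := (hs j').1
    have hlam' : Function.Injective (fun i : Fin n => lam i.castSucc - L - 1) := by
      intro i j hij
      have : lam i.castSucc = lam j.castSucc := by
        have := hij
        simp only at this
        linarith
      exact Fin.castSucc_injective n (hlam this)
    have hsum' : ∀ j : Fin n,
        ∑ i : Fin n, (c i.castSucc * (lam i.castSucc - L)) * s j ^ (lam i.castSucc - L - 1) = 0 := by
      intro j
      have h0 := hs0 j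
      rw [Fin.sum_univ_castSucc] at h0
      simp only [← hL, sub_self, zero_mul, mul_zero, add_zero] at h0
      rw [← h0]
      refine Finset.sum_congr rfl fun i _ => ?_
      ring
    have hc0 : ∀ i : Fin n, c i.castSucc = 0 := by
      intro i
      have := ih (fun i => c i.castSucc * (lam i.castSucc - L))
        (fun i => lam i.castSucc - L - 1) s hsmono hspos hlam' hsum' i
      have hne : lam i.castSucc - L ≠ 0 := by
        intro h
        have : lam i.castSucc = L := by linarith
        have := hlam this
        exact absurd this (Fin.castSucc_lt_last i).ne
      exact (mul_eq_zero.mp this).resolve_right hne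
    have hclast : c (Fin.last n) = 0 := by
      have h0 := hzero (Fin.last n)
      rw [Fin.sum_univ_castSucc] at h0
      simp only [hc0, zero_mul, Finset.sum_const_zero, zero_add] at h0
      have hpos : (0:ℝ) < r (Fin.last n) ^ L := Real.rpow_pos_of_pos (hrpos _) _
      exact (mul_eq_zero.mp h0).resolve_right hpos.ne'
    intro i
    rcases Fin.lastCases (motive := fun i => c i = 0) hclast hc0 i with h
    exact h

theorem generalized_vandermonde_det_ne_zero (N : ℕ) (a lam : Fin N → ℝ)
    (ha_pos : ∀ i, 0 < a i) (ha : StrictMono a) (hlam : StrictMono lam) :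
    (Matrix.of fun i j : Fin N => a j ^ lam i).det ≠ 0 := by
  intro hdet
  rw [← Matrix.det_transpose] at hdet
  obtain ⟨v, hv, hmv⟩ := Matrix.exists_mulVec_eq_zero_iff.mpr hdet
  have hsum : ∀ j : Fin N, ∑ i, v i * a j ^ lam i = 0 := by
    intro j
    have := congrFun hmv j
    simp only [Matrix.mulVec, Matrix.transpose_apply, Matrix.of_apply, dotProduct,
      Pi.zero_apply] at this
    rw [← this]
    exact Finset.sum_congr rfl fun i _ => mul_comm _ _
  have := exp_poly_zero N v lam a ha ha_pos hlam.injective hsum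
  exact hv (funext this)
end

section
/- Let 0 < a₁ < ... < a_N be positive reals, λ₁ < ... < λ_N reals, and c₁,...,c_N reals such that for every k, ∑_{i=1}^N c_i · a_k^{λ_i} = 0. Then c_i = 0 for all i. -/
open Set Finset

private lemma gv_aux : ∀ (N : ℕ) (a lam c : Fin N → ℝ),
    (∀ i, 0 < a i) → StrictMono a → StrictMono lam →
    (∀ k, ∑ i, c i * a k ^ lam i = 0) → ∀ i, c i = 0 := by
  intro N
  induction N with
  | zero => intro a lam c _ _ _ _ i; exact absurd i.2 (by simp)
  | succ N ih =>
    intro a lam c ha_pos ha hlam h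
    -- h(x) = ∑ c i * x ^ (lam i - lam 0)
    set f : ℝ → ℝ := fun x => ∑ i, c i * x ^ (lam i - lam 0) with hf
    set f' : ℝ → ℝ := fun x => ∑ i, c i * ((lam i - lam 0) * x ^ (lam i - lam 0 - 1)) with hf'
    have hfzero : ∀ k, f (a k) = 0 := by
      intro k
      have hx := ha_pos k
      calc f (a k) = (∑ i, c i * a k ^ lam i) * (a k) ^ (-(lam 0)) := by
            rw [Finset.sum_mul]
            refine Finset.sum_congr rfl fun i _ => ?_
            rw [mul_assoc, ← Real.rpow_add hx]
            ring_nf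
        _ = 0 := by rw [h k, zero_mul]
    have hderiv : ∀ x : ℝ, 0 < x → HasDerivAt f (f' x) x := by
      intro x hx
      apply HasDerivAt.fun_sum
      intro i _
      exact (Real.hasDerivAt_rpow_const (Or.inl hx.ne')).const_mul (c i)
    -- Rolle on each [a k, a (k+1)]
    have hrolle : ∀ k : Fin N, ∃ b ∈ Ioo (a k.castSucc) (a k.succ), f' b = 0 := by
      intro k
      have hlt : a k.castSucc < a k.succ := ha (by simp [Fin.lt_def])
      refine exists_hasDerivAt_eq_zero (f := f) (f' := f') hlt ?_ (by rw [hfzero, hfzero]) ?_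
      · intro x hx
        have hx0 : 0 < x := lt_of_lt_of_le (ha_pos k.castSucc) hx.1
        exact ((hderiv x hx0).continuousAt).continuousWithinAt
      · intro x hx
        exact hderiv x (lt_trans (ha_pos k.castSucc) hx.1)
    choose b hb hb0 using hrolle
    have hbpos : ∀ k, 0 < b k := fun k => lt_trans (ha_pos k.castSucc) (hb k).1
    have hbmono : StrictMono b := by
      intro k l hkl
      calc b k < a k.succ := (hb k).2
        _ ≤ a l.castSucc := ha.monotone (Fin.succ_le_castSucc_iff.mpr hkl)
        _ < b l := (hb l).1
    set c' : Fin N → ℝ := fun i => c i.succ * (lam i.succ - lam 0) with hc'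
    set lam' : Fin N → ℝ := fun i => lam i.succ - lam 0 - 1 with hlam'
    have hlam'mono : StrictMono lam' := fun i j hij => by
      simp only [hlam']
      have := hlam (Fin.succ_lt_succ_iff.mpr hij)
      linarith
    have hsum : ∀ k, ∑ i, c' i * b k ^ lam' i = 0 := by
      intro k
      have this : ∑ i : Fin (N + 1), c i * ((lam i - lam 0) * (b k) ^ (lam i - lam 0 - 1)) = 0 :=
        hb0 k
      rw [Fin.sum_univ_succ] at this
      simp only [sub_self, zero_mul, mul_zero, zero_add] at this
      rw [← this]
      refine Finset.sum_congr rfl fun i _ => ?_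
      simp only [hc', hlam']
      ring
    have hc'zero := ih b lam' c' hbpos hbmono hlam'mono hsum
    have hcsucc : ∀ i : Fin N, c i.succ = 0 := by
      intro i
      have := hc'zero i
      simp only [hc'] at this
      rcases mul_eq_zero.mp this with h1 | h2
      · exact h1
      · exfalso
        have : lam 0 < lam i.succ := hlam (Fin.succ_pos i)
        linarith [sub_eq_zero.mp h2]
    have hc0 : c 0 = 0 := by
      have := h 0
      rw [Fin.sum_univ_succ] at this
      have hrest : ∀ i : Fin N, c i.succ * a 0 ^ lam i.succ = 0 := fun i => by
        rw [hcsucc i, zero_mul]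
      rw [Finset.sum_congr rfl (fun i _ => hrest i), Finset.sum_const, smul_zero,
        add_zero] at this
      have hpow : (0:ℝ) < a 0 ^ lam 0 := Real.rpow_pos_of_pos (ha_pos 0) _
      exact (mul_eq_zero.mp this).resolve_right hpow.ne'
    intro i
    refine Fin.cases hc0 hcsucc i

theorem generalized_vandermonde_rows_indep (N : ℕ) (a lam c : Fin N → ℝ)
    (ha_pos : ∀ i, 0 < a i) (ha : StrictMono a) (hlam : StrictMono lam)
    (h : ∀ k, ∑ i, c i * a k ^ lam i = 0) :
    ∀ i, c i = 0 := gv_aux N a lam c ha_pos ha hlam h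
end

section
/- Let W ⊆ ℝ^d, U ⊆ ℝ^{d+d'} measurable with d'-dimensional Hausdorff measure H_{d'}(U) = 0, and let (g(w))_{w∈W} be an ℝ^{d'}-valued stochastic process. Suppose there are constants C, ρ > 0 such that for each (w,v) ∈ U with w ∈ W, the law of g(w) restricted to the ball B(v,ρ) is absolutely continuous with density bounded by C. If g is almost surely Lipschitz continuous (with random Lipschitz constant), then P(∃ w ∈ W : (w, g(w)) ∈ U) = 0. -/
open MeasureTheory
open scoped ENNReal NNReal

theorem graph_aux
    {Ω : Type*} [MeasureSpace Ω] (P : Measure Ω) [IsProbabilityMeasure P]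
    (d d' : ℕ) (W : Set (Fin d → ℝ)) (U : Set ((Fin d → ℝ) × (Fin d' → ℝ)))
    (g : (Fin d → ℝ) → Ω → (Fin d' → ℝ))
    (C ρ : ℝ) (hC : 0 < C) (hρ : 0 < ρ)
    (hdens : ∀ w v, (w, v) ∈ U → w ∈ W →
      ∀ s : Set (Fin d' → ℝ), MeasurableSet s → s ⊆ Metric.ball v ρ →
        P {ω : Ω | g w ω ∈ s} ≤ ENNReal.ofReal C * volume s)
    (hHaus : μH[(d' : ℝ)] U = 0) (n : ℕ) :
    P {ω : Ω | LipschitzOnWith (n : ℝ≥0) (fun w => g w ω) W ∧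
        ∃ w ∈ W, (w, g w ω) ∈ U} = 0 := by
  set S := {ω : Ω | LipschitzOnWith (n : ℝ≥0) (fun w => g w ω) W ∧
        ∃ w ∈ W, (w, g w ω) ∈ U} with hSdef
  refine le_antisymm ?_ (zero_le)
  refine le_trans (ENNReal.le_of_forall_pos_le_add fun ε hε _ => ?_) (le_refl 0)
  rw [zero_add]
  -- constants
  set K : ℝ≥0∞ := ENNReal.ofReal C * ENNReal.ofReal (2 * ((n : ℝ) + 1)) ^ d' with hKdef
  have hn1 : (0:ℝ) < (n : ℝ) + 1 := by positivity
  have hK0 : K ≠ 0 := by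
    simp only [hKdef, ne_eq, mul_eq_zero, pow_eq_zero_iff', ENNReal.ofReal_eq_zero, not_or]
    constructor
    · linarith
    · intro h; linarith [h.1]
  have hKtop : K ≠ ∞ := by
    simp [hKdef, ENNReal.mul_ne_top, ENNReal.pow_ne_top]
  set η : ℝ≥0∞ := (ε : ℝ≥0∞) / K with hηdef
  have hη0 : 0 < η := ENNReal.div_pos (by exact_mod_cast hε.ne') hKtop
  set r0 : ℝ≥0∞ := ENNReal.ofReal (ρ / (2 * ((n : ℝ) + 1))) with hr0def
  have hr0 : 0 < r0 := by
    rw [hr0def]; apply ENNReal.ofReal_pos.2; positivity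
  -- extract a cover from the Hausdorff measure hypothesis
  rw [MeasureTheory.Measure.hausdorffMeasure_apply] at hHaus
  have h1 : (⨅ (t : ℕ → Set ((Fin d → ℝ) × (Fin d' → ℝ))) (_ : U ⊆ ⋃ m, t m)
      (_ : ∀ m, EMetric.diam (t m) ≤ r0),
        ∑' m, ⨆ _ : (t m).Nonempty, EMetric.diam (t m) ^ (d' : ℝ)) = 0 := by
    refine le_antisymm ?_ (zero_le)
    calc _ ≤ _ := le_iSup₂ (f := fun (r : ℝ≥0∞) (_ : 0 < r) =>
          ⨅ (t : ℕ → Set ((Fin d → ℝ) × (Fin d' → ℝ))) (_ : U ⊆ ⋃ m, t m)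
            (_ : ∀ m, EMetric.diam (t m) ≤ r),
              ∑' m, ⨆ _ : (t m).Nonempty, EMetric.diam (t m) ^ (d' : ℝ)) r0 hr0
      _ = 0 := hHaus
  have h2 : (⨅ (t : ℕ → Set ((Fin d → ℝ) × (Fin d' → ℝ))) (_ : U ⊆ ⋃ m, t m)
      (_ : ∀ m, EMetric.diam (t m) ≤ r0),
        ∑' m, ⨆ _ : (t m).Nonempty, EMetric.diam (t m) ^ (d' : ℝ)) < η := by
    rw [h1]; exact hη0
  simp only [iInf_lt_iff] at h2
  obtain ⟨t, htc, htd, hts⟩ := h2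
  -- the good part of the cover
  set U' : Set ((Fin d → ℝ) × (Fin d' → ℝ)) := U ∩ (W ×ˢ Set.univ) with hU'def
  classical
  set E : ℕ → Set Ω := fun m =>
    if h : (t m ∩ U').Nonempty then
      {ω | g h.choose.1 ω ∈ Metric.closedBall h.choose.2
          (((n : ℝ) + 1) * Metric.diam (t m))}
    else ∅ with hEdef
  -- diameters are finite and small
  have hdtop : ∀ m, EMetric.diam (t m) ≠ ∞ := fun m =>
    ((htd m).trans_lt ENNReal.ofReal_lt_top).ne
  have hdiam_le : ∀ m, Metric.diam (t m) ≤ ρ / (2 * ((n : ℝ) + 1)) := by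
    intro m
    have := ENNReal.toReal_mono ENNReal.ofReal_ne_top (htd m)
    rwa [ENNReal.toReal_ofReal (by positivity)] at this
  -- coverage
  have hcov : S ⊆ ⋃ m, E m := by
    rintro ω ⟨hLipω, w, hwW, hwU⟩
    obtain ⟨m, hm⟩ := Set.mem_iUnion.1 (htc hwU)
    have hne : (t m ∩ U').Nonempty :=
      ⟨(w, g w ω), hm, hwU, hwW, Set.mem_univ _⟩
    refine Set.mem_iUnion.2 ⟨m, ?_⟩
    rw [hEdef]
    simp only [dif_pos hne]
    set p := hne.choose with hp
    obtain ⟨hpt, hpU, hpW, -⟩ := hne.choose_spec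
    -- edist estimates
    have h1 : edist (w, g w ω) p ≤ EMetric.diam (t m) :=
      EMetric.edist_le_diam_of_mem hm hpt
    rw [Prod.edist_eq, max_le_iff] at h1
    have hlip : edist (g p.1 ω) (g w ω) ≤ (n : ℝ≥0∞) * edist p.1 w :=
      hLipω hpW hwW
    have h3 : edist (g p.1 ω) p.2 ≤ ((n : ℝ≥0∞) + 1) * EMetric.diam (t m) := by
      calc edist (g p.1 ω) p.2 ≤ edist (g p.1 ω) (g w ω) + edist (g w ω) p.2 :=
            edist_triangle _ _ _
        _ ≤ (n : ℝ≥0∞) * edist p.1 w + EMetric.diam (t m) := add_le_add hlip h1.2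
        _ ≤ (n : ℝ≥0∞) * EMetric.diam (t m) + EMetric.diam (t m) :=
            add_le_add (mul_le_mul_right
              (by rw [edist_comm]; exact h1.1) _) le_rfl
        _ = ((n : ℝ≥0∞) + 1) * EMetric.diam (t m) := by ring
    -- convert to real distance
    have hfin : ((n : ℝ≥0∞) + 1) * EMetric.diam (t m) ≠ ∞ :=
      ENNReal.mul_ne_top (by simp) (hdtop m)
    have h4 := ENNReal.toReal_mono hfin h3
    rw [ENNReal.toReal_mul] at h4
    simp only [Set.mem_setOf_eq, Metric.mem_closedBall, dist_edist]
    refine h4.trans_eq ?_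
    rw [show ((n : ℝ≥0∞) + 1).toReal = (n : ℝ) + 1 by rw [ENNReal.toReal_add (ENNReal.natCast_ne_top n) ENNReal.one_ne_top, ENNReal.toReal_natCast, ENNReal.toReal_one]]
    rfl
  -- per-index measure bound
  have hbound : ∀ m, P (E m) ≤
      K * ⨆ _ : (t m).Nonempty, EMetric.diam (t m) ^ (d' : ℝ) := by
    intro m
    rw [hEdef]
    by_cases h : (t m ∩ U').Nonempty
    · simp only [dif_pos h]
      set p := h.choose with hp
      obtain ⟨hpt, hpU, hpW, -⟩ := h.choose_spec
      have htne : (t m).Nonempty := h.mono Set.inter_subset_left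
      rw [iSup_pos htne]
      set R : ℝ := ((n : ℝ) + 1) * Metric.diam (t m) with hRdef
      have hR0 : 0 ≤ R := by
        apply mul_nonneg (by positivity) Metric.diam_nonneg
      have hsub : Metric.closedBall p.2 R ⊆ Metric.ball p.2 ρ := by
        apply Metric.closedBall_subset_ball
        calc R ≤ ((n : ℝ) + 1) * (ρ / (2 * ((n : ℝ) + 1))) := by
              apply mul_le_mul_of_nonneg_left (hdiam_le m) (by positivity)
          _ = ρ / 2 := by field_simp
          _ < ρ := by linarith
      calc P {ω | g p.1 ω ∈ Metric.closedBall p.2 R}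
          ≤ ENNReal.ofReal C * volume (Metric.closedBall p.2 R) :=
            hdens p.1 p.2 hpU hpW _ measurableSet_closedBall hsub
        _ ≤ K * EMetric.diam (t m) ^ (d' : ℝ) := by
            rw [Real.volume_pi_closedBall _ hR0, Fintype.card_fin, hKdef]
            rw [mul_assoc]
            gcongr
            have : 2 * R = (2 * ((n : ℝ) + 1)) * Metric.diam (t m) := by
              rw [hRdef]; ring
            rw [this, mul_pow, ENNReal.ofReal_mul (by positivity),
              ENNReal.ofReal_pow (by positivity), ENNReal.ofReal_pow Metric.diam_nonneg]
            gcongr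
            calc ENNReal.ofReal (Metric.diam (t m)) ^ d'
                ≤ EMetric.diam (t m) ^ d' := by
                  gcongr
                  all_goals exact ENNReal.ofReal_toReal_le
              _ = EMetric.diam (t m) ^ (d' : ℝ) := (ENNReal.rpow_natCast _ _).symm
    · simp only [dif_neg h, measure_empty]
      exact zero_le
  -- put it together
  calc P S ≤ P (⋃ m, E m) := measure_mono hcov
    _ ≤ ∑' m, P (E m) := measure_iUnion_le _
    _ ≤ ∑' m, K * ⨆ _ : (t m).Nonempty, EMetric.diam (t m) ^ (d' : ℝ) :=
        ENNReal.tsum_le_tsum hbound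
    _ = K * ∑' m, ⨆ _ : (t m).Nonempty, EMetric.diam (t m) ^ (d' : ℝ) :=
        ENNReal.tsum_mul_left
    _ ≤ K * η := mul_le_mul_right hts.le K
    _ = ε := by rw [hηdef, ENNReal.mul_div_cancel hK0 hKtop]

theorem graph_avoids_thin_set
    {Ω : Type*} [MeasureSpace Ω] (P : Measure Ω) [IsProbabilityMeasure P]
    (d d' : ℕ) (W : Set (Fin d → ℝ)) (U : Set ((Fin d → ℝ) × (Fin d' → ℝ)))
    (hW : MeasurableSet W) (hU : MeasurableSet U)
    (g : (Fin d → ℝ) → Ω → (Fin d' → ℝ))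
    (hmeas : ∀ w, Measurable (g w))
    (C ρ : ℝ) (hC : 0 < C) (hρ : 0 < ρ)
    (hdens : ∀ w v, (w, v) ∈ U → w ∈ W →
      ∀ s : Set (Fin d' → ℝ), MeasurableSet s → s ⊆ Metric.ball v ρ →
        P {ω : Ω | g w ω ∈ s} ≤ ENNReal.ofReal C * volume s)
    (hLip : ∀ᵐ ω ∂P, ∃ L : ℝ≥0, LipschitzOnWith L (fun w => g w ω) W)
    (hHaus : μH[(d' : ℝ)] U = 0) :
    P {ω : Ω | ∃ w ∈ W, (w, g w ω) ∈ U} = 0 := by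
  set N : Set Ω := {ω | ¬ ∃ L : ℝ≥0, LipschitzOnWith L (fun w => g w ω) W} with hNdef
  have hN : P N = 0 := hLip
  have hsub : {ω : Ω | ∃ w ∈ W, (w, g w ω) ∈ U} ⊆
      N ∪ ⋃ n : ℕ, {ω : Ω | LipschitzOnWith (n : ℝ≥0) (fun w => g w ω) W ∧
        ∃ w ∈ W, (w, g w ω) ∈ U} := by
    intro ω hω
    by_cases hL : ∃ L : ℝ≥0, LipschitzOnWith L (fun w => g w ω) W
    · obtain ⟨L, hLip'⟩ := hL
      refine Or.inr (Set.mem_iUnion.2 ⟨⌈(L : ℝ)⌉₊, ?_, hω⟩)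
      intro x hx y hy
      refine (hLip' hx hy).trans (mul_le_mul_left ?_ _)
      rw [ENNReal.coe_le_coe]
      have h1 : (L : ℝ) ≤ (⌈(L : ℝ)⌉₊ : ℝ) := Nat.le_ceil _
      exact_mod_cast h1
    · exact Or.inl hL
  refine le_antisymm ?_ (zero_le)
  calc P {ω : Ω | ∃ w ∈ W, (w, g w ω) ∈ U} ≤ P (N ∪ _) := measure_mono hsub
    _ ≤ P N + P (⋃ n : ℕ, {ω : Ω | LipschitzOnWith (n : ℝ≥0) (fun w => g w ω) W ∧
        ∃ w ∈ W, (w, g w ω) ∈ U}) := measure_union_le _ _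
    _ ≤ 0 + ∑' n : ℕ, P {ω : Ω | LipschitzOnWith (n : ℝ≥0) (fun w => g w ω) W ∧
        ∃ w ∈ W, (w, g w ω) ∈ U} := by
        rw [hN]; gcongr; exact measure_iUnion_le _
    _ = 0 := by
        rw [zero_add]
        simp only [graph_aux P d d' W U g C ρ hC hρ hdens hHaus]
        exact tsum_zero
end

section
/- Let J : ℝ^n → ℝ be twice continuously differentiable, θ₀ ∈ ℝ^n, δ > 0 and ρ > 0 such that (i) ‖∇J(θ₀)‖ < (δ/2)·ρ and (ii) the Hessian ∇²J(θ) ⪰ ρ·I for all θ in the open ball B(θ₀, δ). Then J has a local minimum in B(θ₀, δ). -/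
open Set

variable {E : Type*} [NormedAddCommGroup E] [NormedSpace ℝ E]

lemma taylor_lower_aux (J : E → ℝ) (hJ : ContDiff ℝ 2 J) (θ₀ v : E) (c : ℝ)
    (hc : ∀ t ∈ Set.Icc (0:ℝ) 1, c ≤ iteratedFDeriv ℝ 2 J (θ₀ + t • v) ![v, v]) :
    J θ₀ + fderiv ℝ J θ₀ v + c / 2 ≤ J (θ₀ + v) := by
  set L : ℝ → E := fun t => θ₀ + t • v with hLdef
  have hL : ContDiff ℝ 2 L := contDiff_const.add (contDiff_id.smul contDiff_const)
  set g : ℝ → ℝ := fun t => J (L t) with hgdef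
  have hg : ContDiff ℝ 2 g := hJ.comp hL
  have hLd : ∀ t : ℝ, HasDerivAt L v t := by
    intro t
    have := ((hasDerivAt_id t).smul_const v).const_add θ₀
    simpa [hLdef] using this
  have hJd : Differentiable ℝ J := hJ.differentiable (by norm_num)
  have hg' : ∀ t : ℝ, HasDerivAt g (fderiv ℝ J (L t) v) t := fun t =>
    (hJd (L t)).hasFDerivAt.comp_hasDerivAt t (hLd t)
  have hderivg : deriv g = fun t => fderiv ℝ J (L t) v := funext fun t => (hg' t).deriv
  have hF : ContDiff ℝ 1 (fderiv ℝ J) := by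
    have : ContDiff ℝ (1 + 1) J := by norm_num at hJ ⊢; exact hJ
    exact (contDiff_succ_iff_fderiv.mp this).2.2
  have hg'' : ∀ t : ℝ, HasDerivAt (deriv g) (fderiv ℝ (fderiv ℝ J) (L t) v v) t := by
    intro t
    have h1 : HasDerivAt (fun s => fderiv ℝ J (L s)) (fderiv ℝ (fderiv ℝ J) (L t) v) t :=
      (hF.differentiable one_ne_zero (L t)).hasFDerivAt.comp_hasDerivAt t (hLd t)
    have h2 := (ContinuousLinearMap.apply ℝ ℝ v).hasFDerivAt.comp_hasDerivAt t h1
    rw [hderivg]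
    exact h2
  have hdd : ∀ t : ℝ, deriv (deriv g) t = iteratedFDeriv ℝ 2 J (L t) ![v, v] := by
    intro t
    rw [(hg'' t).deriv, iteratedFDeriv_two_apply]
    simp
  have hu : UniqueDiffOn ℝ (Icc (0:ℝ) 1) := uniqueDiffOn_Icc one_pos
  have hEq : Set.EqOn (iteratedDerivWithin 1 g (Icc (0:ℝ) 1)) (deriv g) (Icc (0:ℝ) 1) := by
    intro y hy
    rw [iteratedDerivWithin_one,
      (hg.differentiable (by norm_num) y).derivWithin (hu y hy)]
  have hdg1 : Differentiable ℝ (deriv g) := fun t => (hg'' t).differentiableAt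
  obtain ⟨x', hx', htay⟩ := taylor_mean_remainder_lagrange (n := 1) (f := g) (x₀ := 0) (x := 1) zero_ne_one
    (by rw [uIcc_of_le zero_le_one]; exact (hg.of_le (by norm_num)).contDiffOn)
    (by rw [uIcc_of_le zero_le_one, uIoo_of_le zero_le_one]; exact
      ((hdg1.differentiableOn).congr fun y hy => hEq (Ioo_subset_Icc_self hy)))
  rw [uIcc_of_le zero_le_one] at htay
  rw [uIoo_of_le zero_le_one] at hx'
  have h2 : iteratedDerivWithin 2 g (Icc (0:ℝ) 1) x' = deriv (deriv g) x' := by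
    have hx'' : x' ∈ Icc (0:ℝ) 1 := Ioo_subset_Icc_self hx'
    rw [show (2:ℕ) = 1 + 1 from rfl, iteratedDerivWithin_succ,
      derivWithin_congr hEq (hEq hx''), (hdg1 x').derivWithin (hu x' hx'')]
  have htp : taylorWithinEval g 1 (Icc (0:ℝ) 1) 0 1 = g 0 + fderiv ℝ J θ₀ v := by
    rw [taylorWithinEval_succ, taylor_within_zero_eval,
      iteratedDerivWithin_one,
      (hg.differentiable (by norm_num) 0).derivWithin (hu 0 (by norm_num)), hderivg]
    simp [hLdef]
  rw [htp, h2, hdd] at htay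
  have hcx := hc x' (Ioo_subset_Icc_self hx')
  have hg0 : g 0 = J θ₀ := by simp [hgdef, hLdef]
  have hg1 : g 1 = J (θ₀ + v) := by simp [hgdef, hLdef]
  rw [hg0, hg1] at htay
  have hfac : (((1+1).factorial : ℕ) : ℝ) = 2 := by norm_num [Nat.factorial]
  rw [hfac] at htay
  nlinarith [htay, hcx]

theorem local_min_exists_of_gradient_small_hessian_positive
    (n : ℕ) (J : EuclideanSpace ℝ (Fin n) → ℝ) (hJ : ContDiff ℝ 2 J)
    (θ₀ : EuclideanSpace ℝ (Fin n)) (δ ρ : ℝ) (hδ : 0 < δ) (hρ : 0 < ρ)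
    (hgrad : ‖gradient J θ₀‖ < δ / 2 * ρ)
    (hhess : ∀ θ ∈ Metric.ball θ₀ δ, ∀ v : EuclideanSpace ℝ (Fin n),
      (iteratedFDeriv ℝ 2 J θ) ![v, v] ≥ ρ * ‖v‖ ^ 2) :
    ∃ θs ∈ Metric.ball θ₀ δ, IsLocalMin J θs := by
  have hgn : ‖fderiv ℝ J θ₀‖ = ‖gradient J θ₀‖ := by
    have h : gradient J θ₀
        = (InnerProductSpace.toDual ℝ (EuclideanSpace ℝ (Fin n))).symm (fderiv ℝ J θ₀) := rfl
    rw [h, LinearIsometryEquiv.norm_map]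
  set a : ℝ := 2 * ‖gradient J θ₀‖ / ρ with hadef
  have ha0 : 0 ≤ a := by positivity
  have haδ : a < δ := by
    rw [hadef, div_lt_iff₀ hρ]; nlinarith [norm_nonneg (gradient J θ₀)]
  set r : ℝ := (a + δ) / 2 with hrdef
  have hr0 : 0 < r := by positivity
  have har : a < r := by rw [hrdef]; linarith
  have hrδ : r < δ := by rw [hrdef]; linarith
  obtain ⟨θs, hθsK, hmin⟩ := (isCompact_closedBall θ₀ r).exists_isMinOn
    ⟨θ₀, Metric.mem_closedBall_self hr0.le⟩ hJ.continuous.continuousOn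
  have hJθs : J θs ≤ J θ₀ := hmin (Metric.mem_closedBall_self hr0.le)
  have hin : θs ∈ Metric.ball θ₀ r := by
    by_contra h
    have hd : ‖θs - θ₀‖ = r := le_antisymm (mem_closedBall_iff_norm.mp hθsK)
      (le_of_not_gt fun hlt => h (mem_ball_iff_norm.mpr hlt))
    set v := θs - θ₀ with hvdef
    have hθv : θ₀ + v = θs := by rw [hvdef]; abel
    have key := taylor_lower_aux J hJ θ₀ v (ρ * ‖v‖ ^ 2) ?_
    · have hfb : -(‖gradient J θ₀‖ * r) ≤ fderiv ℝ J θ₀ v := by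
        have h1 := (fderiv ℝ J θ₀).le_opNorm v
        rw [Real.norm_eq_abs, hgn, hd] at h1
        have := neg_abs_le (fderiv ℝ J θ₀ v)
        linarith
      rw [hθv, hd] at key
      have hstrict : ‖gradient J θ₀‖ * r < ρ * r ^ 2 / 2 := by
        have h2 : 2 * ‖gradient J θ₀‖ < ρ * r := by
          rw [hadef, div_lt_iff₀ hρ] at har; nlinarith
        nlinarith
      linarith
    · intro t ht
      have hmem : θ₀ + t • v ∈ Metric.ball θ₀ δ := by
        rw [Metric.mem_ball, dist_eq_norm]
        have : ‖θ₀ + t • v - θ₀‖ = ‖t • v‖ := by congr 1; abel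
        rw [this, norm_smul, Real.norm_eq_abs, abs_of_nonneg ht.1, hd]
        nlinarith [ht.1, ht.2, hr0]
      exact hhess _ hmem v
  exact ⟨θs, Metric.ball_subset_ball hrδ.le hin,
    hmin.isLocalMin (Metric.closedBall_mem_nhds_of_mem hin)⟩
end
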